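/- arXiv:1009.0029 — 2 statements merged into one kernel-verified Lean document; each statement's English description precedes it below -/
import Mathlib

section
/- Let Q be a finite acyclic quiver. Define integer matrices N and A indexed by the vertex set Q₀ by N_{ab} = n_{ab} (the number of paths from a to b) and A_{ab} = the number of arrows from a to b. Then N·(1 − A) = 1 and (1 − A)·N = 1; in particular the Cartan matrix N is invertible over ℤ with inverse 1 − A. -/
open Quiver

section Aux

variable {V : Type} [Quiver V] [Fintype V] [DecidableEq V] [∀ a b : V, Fintype (a ⟶ b)]

/-- Decompose a path by its last arrow. -/
def pathLastEquiv (a b : V) :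
    Path a b ≃ (PLift (a = b)) ⊕ (Σ c : V, Path a c × (c ⟶ b)) where
  toFun p := match p with
    | .nil => Sum.inl ⟨rfl⟩
    | .cons q f => Sum.inr ⟨_, q, f⟩
  invFun x := match x with
    | Sum.inl h => h.down ▸ Path.nil
    | Sum.inr ⟨_, q, f⟩ => q.cons f
  left_inv p := by cases p <;> rfl
  right_inv := by rintro (⟨⟨rfl⟩⟩ | ⟨c, q, f⟩) <;> rfl

theorem path_finite (hacyclic : ∀ (v : V) (p : Path v v), p.length = 0) (a b : V) :
    Finite (Path a b) := by
  set r : V → V → Prop := fun c d => Nonempty (c ⟶ d) with hr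
  have key : ∀ c d : V, Relation.TransGen r c d → ∃ p : Path c d, 0 < p.length := by
    intro c d h
    induction h with
    | single h => obtain ⟨e⟩ := h; exact ⟨Path.nil.cons e, Nat.succ_pos _⟩
    | tail _ he ih =>
        obtain ⟨e⟩ := he; obtain ⟨p, _⟩ := ih
        exact ⟨p.cons e, Nat.succ_pos _⟩
  haveI : IsIrrefl V (Relation.TransGen r) := by
    constructor
    intro v h
    obtain ⟨p, hp⟩ := key v v h
    simp [hacyclic v p] at hp
  have hwf : WellFounded r :=
    Subrelation.wf (fun h => Relation.TransGen.single h)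
      (Finite.wellFounded_of_trans_of_irrefl (Relation.TransGen r))
  induction b using hwf.induction with
  | _ b ih =>
    haveI : ∀ c : V, Finite (Path a c × (c ⟶ b)) := by
      intro c
      by_cases h : Nonempty (c ⟶ b)
      · haveI := ih c h
        infer_instance
      · haveI : IsEmpty (c ⟶ b) := not_nonempty_iff.mp h
        infer_instance
    exact Finite.of_equiv _ (pathLastEquiv a b).symm

theorem card_path_rec (hacyclic : ∀ (v : V) (p : Path v v), p.length = 0) (a b : V) :
    Nat.card (Path a b) =
      (if a = b then 1 else 0) + ∑ c : V, Nat.card (Path a c) * Fintype.card (c ⟶ b) := by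
  haveI : ∀ c : V, Fintype (Path a c) := fun c =>
    @Fintype.ofFinite _ (path_finite hacyclic a c)
  simp only [Nat.card_eq_fintype_card]
  rw [Fintype.card_congr (pathLastEquiv a b), Fintype.card_sum, Fintype.card_sigma]
  congr 1
  · split_ifs with h
    · subst h; simp
    · simp [h]
  · exact Finset.sum_congr rfl fun c _ => Fintype.card_prod _ _

end Aux

/-- For a finite acyclic quiver, the Cartan matrix `N` (counting paths)
and the adjacency matrix `A` (counting arrows) satisfy `N * (1 - A) = 1` and
`(1 - A) * N = 1`; in particular `N` is invertible over `ℤ` with inverse `1 - A`. -/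
theorem cartan_mul_one_sub_adjacency
    (V : Type) [Quiver V] [Fintype V] [DecidableEq V] [∀ a b : V, Fintype (a ⟶ b)]
    (hacyclic : ∀ (v : V) (p : Quiver.Path v v), p.length = 0)
    (N A : Matrix V V ℤ)
    (hN : ∀ a b : V, N a b = Nat.card (Quiver.Path a b))
    (hA : ∀ a b : V, A a b = Fintype.card (a ⟶ b)) :
    N * (1 - A) = 1 ∧ (1 - A) * N = 1 := by
  have hNA : N = 1 + N * A := by
    ext a b
    rw [Matrix.add_apply, Matrix.mul_apply, hN a b, card_path_rec hacyclic]
    push_cast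
    rw [Matrix.one_apply]
    congr 1
    exact Finset.sum_congr rfl fun c _ => by rw [hN, hA]
  have h1 : N * (1 - A) = 1 := by
    rw [mul_sub, mul_one]
    nth_rewrite 1 [hNA]
    exact add_sub_cancel_right 1 (N * A)
  exact ⟨h1, mul_eq_one_comm.mp h1⟩
end

section
/- Let Q be a finite acyclic quiver and S, T subquivers of Q, where S has a unique source s₀. Then every connected component of the fiber product P_{S,s₀} ×_Q E_T, regarded as a quiver over Q via the restricted structure map, is isomorphic over Q to a path quiver P_{W,j}, where j is a vertex of S ∩ T and W is the successor closure of j in S ∩ T, i.e. the subquiver of S ∩ T whose vertices are the terminal vertices of paths in S ∩ T starting at j, together with all arrows of S ∩ T between such vertices. -/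
/-! ## Bundled quivers and quivers over a fixed quiver -/

/-- A (bundled) quiver: a set of vertices, a set of arrows, and source/target maps. -/
structure BQuiv : Type 1 where
  V : Type
  E : Type
  s : E → V
  t : E → V

namespace BQuiv

/-- A morphism of quivers (a "coloring"). -/
@[ext]
structure Hom (A B : BQuiv) where
  onV : A.V → B.V
  onE : A.E → B.E
  hs : ∀ e : A.E, B.s (onE e) = onV (A.s e)
  ht : ∀ e : A.E, B.t (onE e) = onV (A.t e)

/-- Composition of morphisms of quivers. -/
def Hom.comp {A B C : BQuiv} (f : Hom A B) (g : Hom B C) : Hom A C where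
  onV v := g.onV (f.onV v)
  onE e := g.onE (f.onE e)
  hs e := by rw [g.hs, f.hs]
  ht e := by rw [g.ht, f.ht]

/-- `Q.IsPathFrom a b es` : the list of edges `es` forms a path from `a` to `b` in `Q`. -/
def IsPathFrom (Q : BQuiv) : Q.V → Q.V → List Q.E → Prop
  | a, b, [] => a = b
  | a, b, e :: es => Q.s e = a ∧ Q.IsPathFrom (Q.t e) b es

theorem IsPathFrom.snoc {Q : BQuiv} {a b : Q.V} {es : List Q.E}
    (h : Q.IsPathFrom a b es) {e : Q.E} (he : Q.s e = b) :
    Q.IsPathFrom a (Q.t e) (es ++ [e]) := by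
  induction es generalizing a with
  | nil =>
      simp only [IsPathFrom] at h
      subst h
      exact ⟨he, rfl⟩
  | cons f fs ih =>
      obtain ⟨h1, h2⟩ := h
      exact ⟨h1, ih h2⟩

theorem IsPathFrom.append {Q : BQuiv} {a b c : Q.V} {es fs : List Q.E}
    (h : Q.IsPathFrom a b es) (h' : Q.IsPathFrom b c fs) :
    Q.IsPathFrom a c (es ++ fs) := by
  induction es generalizing a with
  | nil =>
      simp only [IsPathFrom] at h
      subst h
      exact h'
  | cons f gs ih =>
      obtain ⟨h1, h2⟩ := h
      exact ⟨h1, ih h2⟩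

/-- `Q` is acyclic if every path from a vertex to itself is trivial. -/
def IsAcyclic (Q : BQuiv) : Prop :=
  ∀ (v : Q.V) (es : List Q.E), Q.IsPathFrom v v es → es = []

/-! ## Subquivers -/

/-- A subquiver of `Q`: a subset of vertices and a subset of arrows with endpoints in it. -/
structure Sub (Q : BQuiv) where
  verts : Set Q.V
  edges : Set Q.E
  src_mem : ∀ e ∈ edges, Q.s e ∈ verts
  tgt_mem : ∀ e ∈ edges, Q.t e ∈ verts

/-- The quiver underlying a subquiver. -/
def Sub.toBQuiv {Q : BQuiv} (T : Sub Q) : BQuiv where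
  V := T.verts
  E := T.edges
  s e := ⟨Q.s e.1, T.src_mem e.1 e.2⟩
  t e := ⟨Q.t e.1, T.tgt_mem e.1 e.2⟩

/-- The inclusion of a subquiver; `E_T` is `(T.toBQuiv, T.incl)` as a quiver over `Q`. -/
def Sub.incl {Q : BQuiv} (T : Sub Q) : Hom T.toBQuiv Q where
  onV := Subtype.val
  onE := Subtype.val
  hs _ := rfl
  ht _ := rfl

/-- `T.IsPathIn a b es` : `es` is a path from `a` to `b` lying entirely in the
subquiver `T`. -/
def Sub.IsPathIn {Q : BQuiv} (T : Sub Q) (a b : Q.V) (es : List Q.E) : Prop :=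
  a ∈ T.verts ∧ Q.IsPathFrom a b es ∧ ∀ e ∈ es, e ∈ T.edges

/-- Intersection of subquivers. -/
def Sub.inter {Q : BQuiv} (S T : Sub Q) : Sub Q where
  verts := S.verts ∩ T.verts
  edges := S.edges ∩ T.edges
  src_mem e he := ⟨S.src_mem e he.1, T.src_mem e he.2⟩
  tgt_mem e he := ⟨S.tgt_mem e he.1, T.tgt_mem e he.2⟩

/-- The full subquiver (all of `Q`). -/
def fullSub (Q : BQuiv) : Sub Q where
  verts := Set.univ
  edges := Set.univ
  src_mem _ _ := trivial
  tgt_mem _ _ := trivial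

/-- `S ⊆ T` for subquivers. -/
def Sub.le {Q : BQuiv} (S T : Sub Q) : Prop :=
  S.verts ⊆ T.verts ∧ S.edges ⊆ T.edges

/-- The successor closure of a vertex `j` in a subquiver `U`: the vertices of `U`
reachable from `j` by a path in `U`, together with all arrows of `U` between them. -/
def succClosure {Q : BQuiv} (U : Sub Q) (j : Q.V) : Sub Q where
  verts := {v | ∃ es, U.IsPathIn j v es}
  edges := {e | e ∈ U.edges ∧ (∃ es, U.IsPathIn j (Q.s e) es) ∧ ∃ es, U.IsPathIn j (Q.t e) es}
  src_mem _ he := he.2.1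
  tgt_mem _ he := he.2.2

/-- `s₀` is the unique source of the subquiver `S`. -/
def Sub.IsUniqueSource {Q : BQuiv} (S : Sub Q) (s₀ : Q.V) : Prop :=
  s₀ ∈ S.verts ∧ (∀ e ∈ S.edges, Q.t e ≠ s₀) ∧
    ∀ v ∈ S.verts, (∀ e ∈ S.edges, Q.t e ≠ v) → v = s₀

/-- `u₀` is the unique sink of the subquiver `S`. -/
def Sub.IsUniqueSink {Q : BQuiv} (S : Sub Q) (u₀ : Q.V) : Prop :=
  u₀ ∈ S.verts ∧ (∀ e ∈ S.edges, Q.s e ≠ u₀) ∧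
    ∀ v ∈ S.verts, (∀ e ∈ S.edges, Q.s e ≠ v) → v = u₀

/-! ## Path and copath quivers -/

/-- The path quiver `P_{T,t}`: vertices are the paths in `T` starting at `t` (recorded as
a pair (endpoint, list of edges)); there is one arrow `p ⟶ p·α` for each path-vertex `p`
and each arrow `α` of `T` starting at the endpoint of `p`. -/
def PathQ {Q : BQuiv} (T : Sub Q) (t : Q.V) : BQuiv where
  V := {x : Q.V × List Q.E // T.IsPathIn t x.1 x.2}
  E := {y : (Q.V × List Q.E) × Q.E //
        T.IsPathIn t y.1.1 y.1.2 ∧ y.2 ∈ T.edges ∧ Q.s y.2 = y.1.1}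
  s y := ⟨y.1.1, y.2.1⟩
  t y := ⟨(Q.t y.1.2, y.1.1.2 ++ [y.1.2]),
    ⟨y.2.1.1, (y.2.1.2.1).snoc y.2.2.2, by
      intro e he
      rcases List.mem_append.1 he with h | h
      · exact y.2.1.2.2 e h
      · rw [List.mem_singleton.1 h]; exact y.2.2.1⟩⟩

/-- The structure map of the path quiver `P_{T,t}` as a quiver over `Q`: a path is sent
to its terminal vertex, and the arrow `(p, α)` to `α`. -/
def pathPi {Q : BQuiv} (T : Sub Q) (t : Q.V) : Hom (PathQ T t) Q where
  onV p := p.1.1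
  onE y := y.1.2
  hs y := y.2.2.2
  ht _ := rfl

/-- The copath quiver `I_{T,u}`: vertices are the paths in `T` ending at `u` (recorded as
a pair (starting vertex, list of edges)); there is one arrow `α·q ⟶ q` for each vertex `q`
and each arrow `α` of `T` ending at the starting vertex of `q`. -/
def CoPathQ {Q : BQuiv} (T : Sub Q) (u : Q.V) : BQuiv where
  V := {x : Q.V × List Q.E // T.IsPathIn x.1 u x.2}
  E := {y : Q.E × (Q.V × List Q.E) //
        T.IsPathIn y.2.1 u y.2.2 ∧ y.1 ∈ T.edges ∧ Q.t y.1 = y.2.1}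
  s y := ⟨(Q.s y.1.1, y.1.1 :: y.1.2.2),
    ⟨T.src_mem _ y.2.2.1, ⟨rfl, by rw [y.2.2.2]; exact y.2.1.2.1⟩, by
      intro e he
      rcases List.mem_cons.1 he with h | h
      · rw [h]; exact y.2.2.1
      · exact y.2.1.2.2 e h⟩⟩
  t y := ⟨y.1.2, y.2.1⟩

/-- The structure map of the copath quiver `I_{T,u}` as a quiver over `Q`: a path is sent
to its starting vertex, and the arrow `(α, q)` to `α`. -/
def coPathPi {Q : BQuiv} (T : Sub Q) (u : Q.V) : Hom (CoPathQ T u) Q where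
  onV p := p.1.1
  onE y := y.1.1
  hs _ := rfl
  ht y := y.2.2.2

/-! ## Fiber products -/

/-- The fiber product of two quivers over `Q`. -/
def Fib {Q Q' Q'' : BQuiv} (f' : Hom Q' Q) (f'' : Hom Q'' Q) : BQuiv where
  V := {p : Q'.V × Q''.V // f'.onV p.1 = f''.onV p.2}
  E := {e : Q'.E × Q''.E // f'.onE e.1 = f''.onE e.2}
  s e := ⟨(Q'.s e.1.1, Q''.s e.1.2), by rw [← f'.hs, ← f''.hs, e.2]⟩
  t e := ⟨(Q'.t e.1.1, Q''.t e.1.2), by rw [← f'.ht, ← f''.ht, e.2]⟩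

/-- The structure map of the fiber product as a quiver over `Q`. -/
def fibHom {Q Q' Q'' : BQuiv} (f' : Hom Q' Q) (f'' : Hom Q'' Q) : Hom (Fib f' f'') Q where
  onV p := f'.onV p.1.1
  onE e := f'.onE e.1.1
  hs e := f'.hs e.1.1
  ht e := f'.ht e.1.1

/-! ## Connected components -/

/-- Adjacency in the underlying undirected graph. -/
def Adj (X : BQuiv) (v w : X.V) : Prop :=
  ∃ e : X.E, (X.s e = v ∧ X.t e = w) ∨ (X.s e = w ∧ X.t e = v)

/-- Connectivity in the underlying undirected graph. -/
def Conn (X : BQuiv) : X.V → X.V → Prop :=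
  Relation.ReflTransGen (Adj X)

/-- The connected component of the vertex `v₀` in `X`, as a quiver. -/
def Component (X : BQuiv) (v₀ : X.V) : BQuiv where
  V := {v : X.V // Conn X v₀ v}
  E := {e : X.E // Conn X v₀ (X.s e)}
  s e := ⟨X.s e.1, e.2⟩
  t e := ⟨X.t e.1, e.2.tail ⟨e.1, Or.inl ⟨rfl, rfl⟩⟩⟩

/-- The inclusion of a connected component. -/
def Component.incl (X : BQuiv) (v₀ : X.V) : Hom (Component X v₀) X where
  onV := Subtype.val
  onE := Subtype.val
  hs _ := rfl
  ht _ := rfl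

/-- A connected component of a quiver over `Q`, regarded as a quiver over `Q` via the
restricted structure map. -/
def componentHom {X Q : BQuiv} (h : Hom X Q) (v₀ : X.V) : Hom (Component X v₀) Q :=
  (Component.incl X v₀).comp h

/-! ## Isomorphisms over `Q` and wrappings -/

/-- An isomorphism of quivers over `Q`: a morphism of quivers commuting with the
structure maps which is bijective on vertices and on arrows. -/
structure OverIso {A B Q : BQuiv} (f : Hom A Q) (g : Hom B Q) where
  hom : Hom A B
  comm : hom.comp g = f
  bijV : Function.Bijective hom.onV
  bijE : Function.Bijective hom.onE

/-- A morphism of quivers is a wrapping if it is injective on parallel arrows. -/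
def IsWrapping {A B : BQuiv} (f : Hom A B) : Prop :=
  ∀ e₁ e₂ : A.E, A.s e₁ = A.s e₂ → A.t e₁ = A.t e₂ → f.onE e₁ = f.onE e₂ → e₁ = e₂

/-! ## Linear quivers tracing a path -/

/-- The linear quiver with vertices `0, 1, …, n` and one arrow `k-1 ⟶ k` for `1 ≤ k ≤ n`. -/
def LinQ (n : ℕ) : BQuiv where
  V := Fin (n + 1)
  E := Fin n
  s := Fin.castSucc
  t := Fin.succ

/-- The vertex reached after `k` steps along a list of edges starting at `a`. -/
def vertAt (Q : BQuiv) : Q.V → List Q.E → ℕ → Q.V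
  | a, _, 0 => a
  | a, [], _ + 1 => a
  | _, e :: es, k + 1 => vertAt Q (Q.t e) es k

theorem vertAt_s {Q : BQuiv} {a b : Q.V} {es : List Q.E} (h : Q.IsPathFrom a b es)
    (k : Fin es.length) : Q.s (es.get k) = vertAt Q a es k.1 := by
  induction es generalizing a with
  | nil => exact absurd k.2 (by simp)
  | cons e es ih =>
      obtain ⟨h1, h2⟩ := h
      rcases k with ⟨k, hk⟩
      cases k with
      | zero => exact h1
      | succ k => exact ih h2 ⟨k, Nat.lt_of_succ_lt_succ hk⟩

theorem vertAt_t {Q : BQuiv} {a b : Q.V} {es : List Q.E} (h : Q.IsPathFrom a b es)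
    (k : Fin es.length) : Q.t (es.get k) = vertAt Q a es (k.1 + 1) := by
  induction es generalizing a with
  | nil => exact absurd k.2 (by simp)
  | cons e es ih =>
      obtain ⟨h1, h2⟩ := h
      rcases k with ⟨k, hk⟩
      cases k with
      | zero =>
          cases es with
          | nil => rfl
          | cons f fs => exact (vertAt_s h2 ⟨0, by simp⟩) ▸ (h2.1).symm ▸ rfl
      | succ k => exact ih h2 ⟨k, Nat.lt_of_succ_lt_succ hk⟩

/-- The linear quiver of length `es.length` tracing the path `es` from `a` to `b`,
as a quiver over `Q`. -/
def traceHom (Q : BQuiv) (a b : Q.V) (es : List Q.E) (h : Q.IsPathFrom a b es) :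
    Hom (LinQ es.length) Q where
  onV k := vertAt Q a es k.1
  onE k := es.get k
  hs k := vertAt_s h k
  ht k := vertAt_t h k

end BQuiv

open BQuiv

namespace BQuiv

theorem Sub.IsPathIn.end_mem {Q : BQuiv} {U : Sub Q} {a b : Q.V} {es : List Q.E}
    (h : U.IsPathIn a b es) : b ∈ U.verts := by
  obtain ⟨h1, h2, h3⟩ := h
  induction es generalizing a with
  | nil => exact h2 ▸ h1
  | cons e es ih =>
      exact ih (U.tgt_mem e (h3 e List.mem_cons_self)) h2.2
        (fun f hf => h3 f (List.mem_cons_of_mem e hf))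

theorem isPathFrom_split {Q : BQuiv} {a b : Q.V} {cs fs : List Q.E}
    (h : Q.IsPathFrom a b (cs ++ fs)) : ∃ m, Q.IsPathFrom a m cs ∧ Q.IsPathFrom m b fs := by
  induction cs generalizing a with
  | nil => exact ⟨a, rfl, h⟩
  | cons e es ih =>
      obtain ⟨h1, h2⟩ := h
      obtain ⟨m, hm1, hm2⟩ := ih h2
      exact ⟨m, ⟨h1, hm1⟩, hm2⟩

theorem Sub.IsPathIn.snoc' {Q : BQuiv} {U : Sub Q} {a b : Q.V} {es : List Q.E}
    (h : U.IsPathIn a b es) {e : Q.E} (he : e ∈ U.edges) (hs : Q.s e = b) :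
    U.IsPathIn a (Q.t e) (es ++ [e]) := by
  refine ⟨h.1, h.2.1.snoc hs, fun f hf => ?_⟩
  rcases List.mem_append.1 hf with hf | hf
  · exact h.2.2 f hf
  · rw [List.mem_singleton.1 hf]; exact he

theorem succClosure_edges {Q : BQuiv} {U : Sub Q} {j : Q.V} :
    ∀ {es : List Q.E} {w v : Q.V} {cs : List Q.E}, U.IsPathIn j w cs →
      Q.IsPathFrom w v es → (∀ e ∈ es, e ∈ U.edges) →
      ∀ e ∈ es, e ∈ (succClosure U j).edges := by
  intro es
  induction es with
  | nil => intro _ _ _ _ _ _ e he; exact absurd he (by simp)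
  | cons f fs ih =>
      intro w v cs hcs hp hU e he
      have hfU : f ∈ U.edges := hU f List.mem_cons_self
      rcases List.mem_cons.1 he with rfl | he
      · exact ⟨hfU, ⟨cs, hp.1 ▸ hcs⟩, ⟨cs ++ [e], hcs.snoc' hfU hp.1⟩⟩
      · exact ih (hcs.snoc' hfU hp.1) hp.2 (fun g hg => hU g (List.mem_cons_of_mem f hg)) e he

theorem Sub.IsPathIn.nil {Q : BQuiv} {U : Sub Q} {a : Q.V} (h : a ∈ U.verts) :
    U.IsPathIn a a [] :=
  ⟨h, rfl, by simp⟩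

theorem succClosure_path {Q : BQuiv} {U : Sub Q} {j v : Q.V} {es : List Q.E}
    (h : U.IsPathIn j v es) : (succClosure U j).IsPathIn j v es :=
  ⟨⟨[], Sub.IsPathIn.nil h.1⟩, h.2.1,
    succClosure_edges (Sub.IsPathIn.nil h.1) h.2.1 h.2.2⟩

theorem exists_decomp {Q : BQuiv} (T : Sub Q) (l : List Q.E) :
    ∃ c fs, l = c ++ fs ∧ (∀ e ∈ fs, e ∈ T.edges) ∧
      ∀ h : c ≠ [], c.getLast h ∉ T.edges := by
  induction l using List.reverseRecOn with
  | nil => exact ⟨[], [], rfl, by simp, fun h => absurd rfl h⟩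
  | append_singleton l α ih =>
      by_cases hα : α ∈ T.edges
      · obtain ⟨c, fs, h1, h2, h3⟩ := ih
        refine ⟨c, fs ++ [α], by rw [h1, List.append_assoc], fun e he => ?_, h3⟩
        rcases List.mem_append.1 he with he | he
        · exact h2 e he
        · rw [List.mem_singleton.1 he]; exact hα
      · exact ⟨l ++ [α], [], by simp, by simp, fun h => by simpa using hα⟩

end BQuiv

/-- Every connected component of the fiber product `P_{S,s₀} ×_Q E_T`
is isomorphic over `Q` to a path quiver `P_{W,j}`, where `j` is a vertex of `S ∩ T` and
`W` is the successor closure of `j` in `S ∩ T`. -/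
theorem component_pathQuiver_prod_idempotent
    (Q : BQuiv) [Fintype Q.V] [Fintype Q.E] (hQ : Q.IsAcyclic)
    (S T : Sub Q) (s₀ : Q.V) (hS : S.IsUniqueSource s₀) :
    ∀ v₀ : (Fib (pathPi S s₀) T.incl).V,
      ∃ j ∈ (S.inter T).verts,
        Nonempty (OverIso (componentHom (fibHom (pathPi S s₀) T.incl) v₀)
          (pathPi (succClosure (S.inter T) j) j)) := by
  intro v₀
  obtain ⟨⟨⟨⟨v, l⟩, hl⟩, ⟨tv, htv⟩⟩, hv⟩ := v₀
  have hv' : v = tv := hv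
  subst hv'
  obtain ⟨hl1, hl2, hl3⟩ := hl
  obtain ⟨c, fs, hlcf, hfsT, hcLast⟩ := exists_decomp T l
  subst hlcf
  obtain ⟨j, hjc, hjfs⟩ := isPathFrom_split hl2
  have hcS : ∀ e ∈ c, e ∈ S.edges := fun e he => hl3 e (List.mem_append_left _ he)
  have hfsS : ∀ e ∈ fs, e ∈ S.edges := fun e he => hl3 e (List.mem_append_right _ he)
  have hjcS : S.IsPathIn s₀ j c := ⟨hS.1, hjc, hcS⟩
  have hjS : j ∈ S.verts := hjcS.end_mem
  have hjT : j ∈ T.verts := by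
    cases fs with
    | nil => exact hjfs ▸ htv
    | cons e fs' => exact hjfs.1 ▸ T.src_mem e (hfsT e List.mem_cons_self)
  have hjST : j ∈ (S.inter T).verts := ⟨hjS, hjT⟩
  set FibQ := Fib (pathPi S s₀) T.incl with hFibQ
  let mkV : ∀ (w : Q.V) (m : List Q.E), S.IsPathIn s₀ w m → w ∈ T.verts → FibQ.V :=
    fun w m h1 h2 => ⟨(⟨(w, m), h1⟩, ⟨w, h2⟩), rfl⟩
  have mk_eq : ∀ {w m h1 h2 w' m' h1' h2'}, w = w' → m = m' →
      mkV w m h1 h2 = mkV w' m' h1' h2' := by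
    intro w m h1 h2 w' m' h1' h2' hw hm
    subst hw; subst hm; rfl
  have step : ∀ (w : Q.V) (m : List Q.E) (hm : S.IsPathIn s₀ w m) (hw : w ∈ T.verts)
      (α : Q.E) (hαS : α ∈ S.edges) (hαT : α ∈ T.edges) (hsα : Q.s α = w)
      (h1 : S.IsPathIn s₀ (Q.t α) (m ++ [α])) (h2 : Q.t α ∈ T.verts),
      Adj FibQ (mkV w m hm hw) (mkV (Q.t α) (m ++ [α]) h1 h2) := by
    intro w m hm hw α hαS hαT hsα h1 h2
    refine ⟨⟨(⟨((w, m), α), hm, hαS, hsα⟩, ⟨α, hαT⟩), rfl⟩, Or.inl ⟨?_, ?_⟩⟩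
    · exact Subtype.ext (Prod.ext rfl (Subtype.ext hsα))
    · rfl
  have chain : ∀ (es : List Q.E) (w w' : Q.V) (m : List Q.E) (hm : S.IsPathIn s₀ w m)
      (hw : w ∈ T.verts) (hp : Q.IsPathFrom w w' es)
      (hes : ∀ e ∈ es, e ∈ S.edges ∧ e ∈ T.edges)
      (h1 : S.IsPathIn s₀ w' (m ++ es)) (h2 : w' ∈ T.verts),
      Conn FibQ (mkV w m hm hw) (mkV w' (m ++ es) h1 h2) := by
    intro es
    induction es with
    | nil =>
        intro w w' m hm hw hp hes h1 h2
        obtain rfl : w' = w := hp.symm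
        have heq : mkV _ (m ++ []) h1 h2 = mkV _ m hm hw := mk_eq rfl (List.append_nil m)
        rw [heq]
        exact Relation.ReflTransGen.refl
    | cons α es' ih =>
        intro w w' m hm hw hp hes h1 h2
        obtain ⟨hsα, hp'⟩ := hp
        have hα := hes α List.mem_cons_self
        have hmα : S.IsPathIn s₀ (Q.t α) (m ++ [α]) := hm.snoc' hα.1 hsα
        have htT : Q.t α ∈ T.verts := T.tgt_mem α hα.2
        have h1' : S.IsPathIn s₀ w' ((m ++ [α]) ++ es') := by
          rw [List.append_assoc, List.singleton_append]; exact h1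
        have hrest := ih (Q.t α) w' (m ++ [α]) hmα htT hp'
          (fun e he => hes e (List.mem_cons_of_mem α he)) h1' h2
        refine Relation.ReflTransGen.head (step w m hm hw α hα.1 hα.2 hsα hmα htT) ?_
        rw [show mkV w' (m ++ α :: es') h1 h2 = mkV w' ((m ++ [α]) ++ es') h1' h2 from
          mk_eq rfl (by rw [List.append_assoc, List.singleton_append])]
        exact hrest
  have adjSymm : Symmetric (Adj FibQ) := fun a b ⟨e, h⟩ => ⟨e, h.symm⟩
  have connSymm : Symmetric (Conn FibQ) := fun a b (h : Relation.ReflTransGen (Adj FibQ) a b) => by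
    induction h with
    | refl => exact Relation.ReflTransGen.refl
    | tail _ hab ih => exact Relation.ReflTransGen.head (adjSymm hab) ih
  have hlS : S.IsPathIn s₀ v (c ++ fs) := ⟨hl1, hl2, hl3⟩
  set v₀q : FibQ.V := ⟨(⟨(v, c ++ fs), hlS⟩, ⟨v, htv⟩), rfl⟩ with hv₀q
  have claimA : ∀ q : FibQ.V, Conn FibQ v₀q q →
      ∃ es, q.1.1.1.2 = c ++ es ∧ (S.inter T).IsPathIn j q.1.1.1.1 es := by
    intro q hq
    induction hq with
    | refl =>
        exact ⟨fs, rfl, hjST, hjfs, fun e he => ⟨hfsS e he, hfsT e he⟩⟩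
    | @tail b q hb hadj ih =>
        obtain ⟨⟨⟨⟨⟨⟨w, m⟩, α⟩, hm, hαS, hsα⟩, β, hβ⟩, hee⟩, hcase⟩ := hadj
        have hee' : α = β := hee
        subst hee'
        rcases hcase with ⟨h1, h2⟩ | ⟨h1, h2⟩
        · have hb1 : b.1.1.1 = (w, m) := (congrArg (fun x => x.1.1.1) h1).symm
          have hq1 : q.1.1.1 = (Q.t α, m ++ [α]) := (congrArg (fun x => x.1.1.1) h2).symm
          obtain ⟨es, he1, he2⟩ := ih
          rw [hb1] at he1 he2
          refine ⟨es ++ [α], ?_, ?_⟩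
          · rw [hq1, ← List.append_assoc, ← he1]
          · rw [hq1]
            exact he2.snoc' ⟨hαS, hβ⟩ hsα
        · have hb1 : b.1.1.1 = (Q.t α, m ++ [α]) := (congrArg (fun x => x.1.1.1) h2).symm
          have hq1 : q.1.1.1 = (w, m) := (congrArg (fun x => x.1.1.1) h1).symm
          obtain ⟨es, he1, he2⟩ := ih
          rw [hb1] at he1 he2
          rcases List.eq_nil_or_concat es with rfl | ⟨es'', γ, rfl⟩
          · exfalso
            rw [List.append_nil] at he1
            subst he1
            have h := hcLast (by simp)
            simp at h
            exact h hβ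
          · rw [List.concat_eq_append] at he1 he2
            rw [← List.append_assoc] at he1
            obtain ⟨hmc, hag⟩ := List.append_inj' he1 rfl
            have hγ : γ = α := by simpa using hag.symm
            subst hγ
            refine ⟨es'', by rw [hq1, hmc], ?_⟩
            obtain ⟨hjv, hpth, hedg⟩ := he2
            obtain ⟨m', hm1', hm2'⟩ := isPathFrom_split hpth
            have hm'w : m' = w := by rw [← hm2'.1, hsα]
            rw [hq1]
            exact ⟨hjv, hm'w ▸ hm1', fun e he => hedg e (List.mem_append_left _ he)⟩
  have claimB : ∀ (es : List Q.E) (v' : Q.V) (hp : Q.IsPathFrom j v' es)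
      (hes : ∀ e ∈ es, e ∈ S.edges ∧ e ∈ T.edges)
      (h1 : S.IsPathIn s₀ v' (c ++ es)) (h2 : v' ∈ T.verts),
      Conn FibQ v₀q (mkV v' (c ++ es) h1 h2) := by
    intro es v' hp hes h1 h2
    have h1fs : Conn FibQ (mkV j c hjcS hjT) (mkV v (c ++ fs) hlS htv) :=
      chain fs j v c hjcS hjT hjfs (fun e he => ⟨hfsS e he, hfsT e he⟩) hlS htv
    have hv₀ : v₀q = mkV v (c ++ fs) hlS htv := rfl
    exact Relation.ReflTransGen.trans (hv₀ ▸ connSymm h1fs)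
      (chain es j v' c hjcS hjT hp hes h1 h2)
  have mkSTpath : ∀ {v' : Q.V} {es : List Q.E}, (S.inter T).IsPathIn j v' es →
      S.IsPathIn s₀ v' (c ++ es) := by
    intro v' es hes
    refine ⟨hl1, hjc.append hes.2.1, fun e he => ?_⟩
    rcases List.mem_append.1 he with he | he
    · exact hcS e he
    · exact (hes.2.2 e he).1
  have keyV : ∀ p : FibQ.V, Conn FibQ v₀q p →
      (succClosure (S.inter T) j).IsPathIn j p.1.1.1.1 (p.1.1.1.2.drop c.length) := by
    intro p hp
    obtain ⟨es, h1, h2⟩ := claimA p hp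
    rw [h1, List.drop_left]
    exact succClosure_path h2
  refine ⟨j, hjST, ⟨{
    hom := {
      onV := fun q => ⟨(q.1.1.1.1.1, q.1.1.1.1.2.drop c.length), keyV q.1 q.2⟩
      onE := fun e => ⟨((e.1.1.1.1.1.1, e.1.1.1.1.1.2.drop c.length), e.1.1.1.1.2), ?_, ?_, ?_⟩
      hs := fun e => rfl
      ht := fun e => ?_ }
    comm := ?_
    bijV := ⟨?_, ?_⟩
    bijE := ⟨?_, ?_⟩ }⟩⟩
  · -- onE first obligation
    exact keyV (FibQ.s e.1) e.2
  · -- onE second obligation: α ∈ W.edges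
    obtain ⟨⟨⟨⟨⟨⟨w, m⟩, α⟩, hm, hαS, hsα⟩, β, hβ⟩, hpeq⟩, hconn⟩ := e
    have heq : α = β := hpeq
    subst heq
    obtain ⟨es, h1, h2⟩ := claimA _ hconn
    have h2' : (S.inter T).IsPathIn j w es := h2
    exact ⟨⟨hαS, hβ⟩, ⟨es, by rw [hsα]; exact h2'⟩,
      ⟨es ++ [α], h2'.snoc' ⟨hαS, hβ⟩ hsα⟩⟩
  · -- onE third obligation
    exact e.1.1.1.2.2.2
  · -- ht
    obtain ⟨⟨⟨⟨⟨⟨w, m⟩, α⟩, hm, hαS, hsα⟩, β, hβ⟩, hpeq⟩, hconn⟩ := e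
    obtain ⟨es, h1, h2⟩ := claimA _ hconn
    have hx : m = c ++ es := h1
    apply Subtype.ext
    refine Prod.ext rfl ?_
    show m.drop c.length ++ [α] = (m ++ [α]).drop c.length
    rw [hx, List.append_assoc, List.drop_left, List.drop_left]
  · -- comm
    rfl
  · -- bijV injective
    intro q q' hqq
    obtain ⟨⟨⟨⟨⟨a, la⟩, hla⟩, ⟨ta, hta⟩⟩, hea⟩, hca⟩ := q
    obtain ⟨⟨⟨⟨⟨b, lb⟩, hlb⟩, ⟨tb, htb⟩⟩, heb⟩, hcb⟩ := q'
    have hab : a = b := congrArg (fun x => x.1.1) hqq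
    have hdrop : la.drop c.length = lb.drop c.length := congrArg (fun x => x.1.2) hqq
    obtain ⟨es, h1, h2⟩ := claimA _ hca
    obtain ⟨es', h1', h2'⟩ := claimA _ hcb
    have hx : la = c ++ es := h1
    have hx' : lb = c ++ es' := h1'
    have hll : la = lb := by
      rw [hx, hx'] at hdrop ⊢
      rw [List.drop_left, List.drop_left] at hdrop
      rw [hdrop]
    have h₁ : a = ta := hea
    have h₂ : b = tb := heb
    have htt : ta = tb := by rw [← h₁, ← h₂, hab]
    subst hab; subst hll; subst htt
    rfl
  · -- bijV surjective
    rintro ⟨⟨v', es⟩, hes⟩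
    have hST : (S.inter T).IsPathIn j v' es := ⟨hjST, hes.2.1, fun e he => (hes.2.2 e he).1⟩
    have hm : S.IsPathIn s₀ v' (c ++ es) := mkSTpath hST
    have hvT : v' ∈ T.verts := hST.end_mem.2
    refine ⟨⟨mkV v' (c ++ es) hm hvT,
      claimB es v' hST.2.1 (fun e he => ⟨(hST.2.2 e he).1, (hST.2.2 e he).2⟩) hm hvT⟩, ?_⟩
    apply Subtype.ext
    exact Prod.ext rfl List.drop_left
  · -- bijE injective
    intro e e' hee
    obtain ⟨⟨⟨⟨⟨⟨w, m⟩, α⟩, hm, hαS, hsα⟩, β, hβ⟩, hpeq⟩, hce⟩ := e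
    obtain ⟨⟨⟨⟨⟨⟨w', m'⟩, α'⟩, hm', hαS', hsα'⟩, β', hβ'⟩, hpeq'⟩, hce'⟩ := e'
    have hww : w = w' := congrArg (fun x => x.1.1.1) hee
    have hdrop : m.drop c.length = m'.drop c.length := congrArg (fun x => x.1.1.2) hee
    have hαα : α = α' := congrArg (fun x => x.1.2) hee
    obtain ⟨es, h1, h2⟩ := claimA _ hce
    obtain ⟨es', h1', h2'⟩ := claimA _ hce'
    have hx : m = c ++ es := h1
    have hx' : m' = c ++ es' := h1'
    have hmm : m = m' := by
      rw [hx, hx'] at hdrop ⊢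
      rw [List.drop_left, List.drop_left] at hdrop
      rw [hdrop]
    have e1 : α = β := hpeq
    have e2 : α' = β' := hpeq'
    have hbb : β = β' := by rw [← e1, ← e2, hαα]
    subst hww; subst hαα; subst hmm; subst hbb
    rfl
  · -- bijE surjective
    rintro ⟨⟨⟨v', es⟩, α⟩, hpes, hαW, hsα⟩
    have hST : (S.inter T).IsPathIn j v' es := ⟨hjST, hpes.2.1, fun e he => (hpes.2.2 e he).1⟩
    have hm : S.IsPathIn s₀ v' (c ++ es) := mkSTpath hST
    have hvT : v' ∈ T.verts := hST.end_mem.2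
    have hαS : α ∈ S.edges := hαW.1.1
    have hαT : α ∈ T.edges := hαW.1.2
    refine ⟨⟨⟨(⟨((v', c ++ es), α), hm, hαS, hsα⟩, ⟨α, hαT⟩), rfl⟩, ?_⟩, ?_⟩
    · have hsrc : FibQ.s ⟨(⟨((v', c ++ es), α), hm, hαS, hsα⟩, ⟨α, hαT⟩), rfl⟩ =
          mkV v' (c ++ es) hm hvT :=
        Subtype.ext (Prod.ext rfl (Subtype.ext hsα))
      rw [hsrc]
      exact claimB es v' hST.2.1 (fun e he => ⟨(hST.2.2 e he).1, (hST.2.2 e he).2⟩) hm hvT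
    · apply Subtype.ext
      exact Prod.ext (Prod.ext rfl List.drop_left) rfl
end
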